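/- Let v ∈ H^s(ℝⁿ) and for each k ∈ ℕ let θ_k : ℝ → [0,1] be Lipschitz with constant C/k, supported in [-2k, 2k], and equal to 1 on [-k, k]. Then v_k := θ_k(v) · v belongs to H^s(ℝⁿ) ∩ L^∞(ℝⁿ), satisfies -v⁻ ≤ v_k ≤ v⁺ a.e., |v_k| ≤ |v| a.e., and v_k → v strongly in H^s(ℝⁿ). -/

import Mathlib

open MeasureTheory
open scoped ENNReal

/-- Gagliardo seminorm (squared) of a function on `ℝⁿ`. -/
noncomputable def gagliardo (n : ℕ) (s : ℝ) (u : (Fin n → ℝ) → ℝ) : ℝ≥0∞ :=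
  ∫⁻ p : (Fin n → ℝ) × (Fin n → ℝ),
    ENNReal.ofReal ((u p.1 - u p.2) ^ 2 / ‖p.1 - p.2‖ ^ (n + 2 * s))

/-- Membership in the fractional Sobolev space `H^s(ℝⁿ)`. -/
def MemHs (n : ℕ) (s : ℝ) (u : (Fin n → ℝ) → ℝ) : Prop :=
  MemLp u 2 volume ∧ gagliardo n s u < ⊤

lemma lip_key (C : ℝ) (k : ℕ) (θ : ℝ → ℝ)
    (hθ01 : ∀ x, θ x ∈ Set.Icc (0:ℝ) 1)
    (hθlip : ∀ x y, |θ x - θ y| ≤ C / ((k:ℝ)+1) * |x - y|)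
    (hθsupp : ∀ x, 2 * ((k:ℝ)+1) < |x| → θ x = 0)
    (hC : 0 < C) :
    ∀ a b : ℝ, |θ a * a - θ b * b| ≤ (1 + 2*C) * |a - b| := by
  have hk : (0:ℝ) < (k:ℝ) + 1 := by positivity
  have main : ∀ a b : ℝ, |b| ≤ 2 * ((k:ℝ)+1) → |θ a * a - θ b * b| ≤ (1 + 2*C) * |a - b| := by
    intro a b hb
    have h1 : |θ a| ≤ 1 := abs_le.mpr ⟨by linarith [(hθ01 a).1], (hθ01 a).2⟩
    have h2 : |θ a - θ b| ≤ C / ((k:ℝ)+1) * |a - b| := hθlip a b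
    have key : θ a * a - θ b * b = θ a * (a - b) + (θ a - θ b) * b := by ring
    calc |θ a * a - θ b * b| ≤ |θ a * (a - b)| + |(θ a - θ b) * b| := by
            rw [key]; exact abs_add_le _ _
      _ = |θ a| * |a - b| + |θ a - θ b| * |b| := by rw [abs_mul, abs_mul]
      _ ≤ 1 * |a - b| + (C / ((k:ℝ)+1) * |a - b|) * (2 * ((k:ℝ)+1)) := by
            have h3 : 0 ≤ |a - b| := abs_nonneg _
            have h4 : 0 ≤ |b| := abs_nonneg _
            nlinarith [abs_nonneg (θ a - θ b), mul_le_mul_of_nonneg_right h2 h4]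
      _ ≤ (1 + 2*C) * |a - b| := by
            have : C / ((k:ℝ)+1) * ((k:ℝ)+1) = C := by field_simp
            nlinarith [abs_nonneg (a - b)]
  intro a b
  rcases le_or_gt (|b|) (2 * ((k:ℝ)+1)) with hb | hb
  · exact main a b hb
  rcases le_or_gt (|a|) (2 * ((k:ℝ)+1)) with ha | ha
  · rw [abs_sub_comm, abs_sub_comm a b] at *
    exact main b a ha
  · rw [hθsupp a ha, hθsupp b hb]
    simp
    positivity

lemma enn_sq (a : ℝ) : (‖a‖₊ : ℝ≥0∞) ^ (2:ℝ) = ENNReal.ofReal (a^2) := by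
  rw [← enorm_eq_nnnorm, ← ofReal_norm, ENNReal.ofReal_rpow_of_nonneg (norm_nonneg a) (by norm_num)]
  congr 1
  rw [Real.norm_eq_abs, Real.rpow_two, sq_abs]

set_option maxHeartbeats 1000000 in
theorem stmt_7 (n : ℕ) (s : ℝ) (hs : s ∈ Set.Ioo (0 : ℝ) 1)
    (v : (Fin n → ℝ) → ℝ) (hv : MemHs n s v) (hvmeas : Measurable v)
    (θ : ℕ → ℝ → ℝ) (C : ℝ) (hC : 0 < C)
    (hθ01 : ∀ (k : ℕ) (x : ℝ), θ k x ∈ Set.Icc (0 : ℝ) 1)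
    (hθlip : ∀ (k : ℕ) (x y : ℝ), |θ k x - θ k y| ≤ C / ((k : ℝ) + 1) * |x - y|)
    (hθsupp : ∀ (k : ℕ) (x : ℝ), 2 * ((k : ℝ) + 1) < |x| → θ k x = 0)
    (hθone : ∀ (k : ℕ) (x : ℝ), |x| ≤ (k : ℝ) + 1 → θ k x = 1) :
    (∀ k, MemHs n s (fun x => θ k (v x) * v x)) ∧
    (∀ k, ∃ M : ℝ, ∀ᵐ x : Fin n → ℝ, |θ k (v x) * v x| ≤ M) ∧
    (∀ k, ∀ᵐ x : Fin n → ℝ,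
      min (v x) 0 ≤ θ k (v x) * v x ∧ θ k (v x) * v x ≤ max (v x) 0 ∧
      |θ k (v x) * v x| ≤ |v x|) ∧
    Filter.Tendsto (fun k => eLpNorm (fun x => θ k (v x) * v x - v x) 2 volume)
      Filter.atTop (nhds 0) ∧
    Filter.Tendsto (fun k => gagliardo n s (fun x => θ k (v x) * v x - v x))
      Filter.atTop (nhds 0) := by
  obtain ⟨hs0, hs1⟩ := hs
  have hθmeas : ∀ k, Measurable (θ k) := by
    intro k
    have hk : (0:ℝ) < (k:ℝ) + 1 := by positivity
    have : LipschitzWith (Real.toNNReal (C / ((k:ℝ)+1))) (θ k) := by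
      apply LipschitzWith.of_dist_le_mul
      intro x y
      rw [Real.dist_eq, Real.dist_eq]
      calc |θ k x - θ k y| ≤ C / ((k:ℝ)+1) * |x - y| := hθlip k x y
        _ ≤ Real.toNNReal (C / ((k:ℝ)+1)) * |x - y| := by
            gcongr
            exact Real.le_coe_toNNReal _
    exact this.continuous.measurable
  have hvkmeas : ∀ k, Measurable (fun x => θ k (v x) * v x) :=
    fun k => ((hθmeas k).comp hvmeas).mul hvmeas
  have hlip : ∀ k (a b : ℝ), |θ k a * a - θ k b * b| ≤ (1 + 2*C) * |a - b| :=
    fun k => lip_key C k (θ k) (hθ01 k) (hθlip k) (hθsupp k) hC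
  have habs : ∀ k x, |θ k (v x) * v x| ≤ |v x| := by
    intro k x
    rw [abs_mul]
    exact mul_le_of_le_one_left (abs_nonneg _)
      (abs_le.mpr ⟨by linarith [(hθ01 k (v x)).1], (hθ01 k (v x)).2⟩)
  have hdnn : ∀ p : (Fin n → ℝ) × (Fin n → ℝ), (0:ℝ) ≤ ‖p.1 - p.2‖ ^ ((n:ℝ) + 2 * s) :=
    fun p => Real.rpow_nonneg (norm_nonneg _) _
  -- θ k (v x) = 1 for large k, pointwise
  have hevone : ∀ x : Fin n → ℝ, ∀ᶠ k : ℕ in Filter.atTop, θ k (v x) = 1 := by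
    intro x
    filter_upwards [Filter.eventually_ge_atTop ⌈|v x|⌉₊] with k hk
    apply hθone
    calc |v x| ≤ (⌈|v x|⌉₊ : ℝ) := Nat.le_ceil _
      _ ≤ (k:ℝ) := by exact_mod_cast hk
      _ ≤ (k:ℝ) + 1 := by linarith
  -- pointwise quotient bound
  have hq : ∀ k (p : (Fin n → ℝ) × (Fin n → ℝ)),
      (θ k (v p.1) * v p.1 - θ k (v p.2) * v p.2) ^ 2 / ‖p.1 - p.2‖ ^ ((n:ℝ) + 2 * s)
        ≤ (1 + 2*C)^2 * ((v p.1 - v p.2) ^ 2 / ‖p.1 - p.2‖ ^ ((n:ℝ) + 2 * s)) := by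
    intro k p
    rw [mul_div_assoc', div_eq_mul_inv, div_eq_mul_inv]
    apply mul_le_mul_of_nonneg_right _ (inv_nonneg.mpr (hdnn p))
    calc (θ k (v p.1) * v p.1 - θ k (v p.2) * v p.2) ^ 2
        = |θ k (v p.1) * v p.1 - θ k (v p.2) * v p.2| ^ 2 := (sq_abs _).symm
      _ ≤ ((1 + 2*C) * |v p.1 - v p.2|) ^ 2 :=
          pow_le_pow_left₀ (abs_nonneg _) (hlip k (v p.1) (v p.2)) 2
      _ = (1 + 2*C)^2 * (v p.1 - v p.2)^2 := by rw [mul_pow, sq_abs]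
  have hgv : gagliardo n s v < ⊤ := hv.2
  have hGmeas : ∀ (u : (Fin n → ℝ) → ℝ), Measurable u →
      Measurable (fun p : (Fin n → ℝ) × (Fin n → ℝ) =>
        ENNReal.ofReal ((u p.1 - u p.2) ^ 2 / ‖p.1 - p.2‖ ^ ((n:ℝ) + 2 * s))) := by
    intro u hu
    apply ENNReal.measurable_ofReal.comp
    apply Measurable.div
    · exact ((hu.comp measurable_fst).sub (hu.comp measurable_snd)).pow_const 2
    · fun_prop
  have part1 : ∀ k, MemHs n s (fun x => θ k (v x) * v x) := by
    intro k
    constructor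
    · apply hv.1.of_le (hvkmeas k).aestronglyMeasurable
      filter_upwards with x
      rw [Real.norm_eq_abs, Real.norm_eq_abs]
      exact habs k x
    · have hle : gagliardo n s (fun x => θ k (v x) * v x)
          ≤ ENNReal.ofReal ((1 + 2*C)^2) * gagliardo n s v := by
        unfold gagliardo
        rw [← lintegral_const_mul' _ _ ENNReal.ofReal_ne_top]
        apply lintegral_mono
        intro p
        dsimp only
        rw [← ENNReal.ofReal_mul (by positivity)]
        exact ENNReal.ofReal_le_ofReal (hq k p)
      exact lt_of_le_of_lt hle (ENNReal.mul_lt_top ENNReal.ofReal_lt_top hgv)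
  refine ⟨part1, ?_, ?_, ?_, ?_⟩
  · -- part 2: boundedness
    intro k
    refine ⟨2 * ((k:ℝ) + 1), Filter.Eventually.of_forall fun x => ?_⟩
    rcases le_or_gt (|v x|) (2 * ((k:ℝ)+1)) with h | h
    · exact le_trans (habs k x) h
    · rw [hθsupp k (v x) h]
      simp
      positivity
  · -- part 3: pointwise comparisons
    intro k
    refine Filter.Eventually.of_forall fun x => ?_
    obtain ⟨h0, h1⟩ := hθ01 k (v x)
    refine ⟨?_, ?_, habs k x⟩
    · rcases le_or_gt 0 (v x) with h | h
      · rw [min_eq_right h]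
        exact mul_nonneg h0 h
      · rw [min_eq_left h.le]
        nlinarith
    · rcases le_or_gt 0 (v x) with h | h
      · rw [max_eq_left h]
        nlinarith
      · rw [max_eq_right h.le]
        exact mul_nonpos_of_nonneg_of_nonpos h0 h.le
  · -- part 4: L² convergence
    have hfin : (∫⁻ x, ENNReal.ofReal ((v x)^2) ∂volume) ≠ ⊤ := by
      have h := hv.1.2
      rw [eLpNorm_eq_lintegral_rpow_enorm_toReal (by norm_num) (by norm_num)] at h
      have h2 : (∫⁻ x, (‖v x‖₊ : ℝ≥0∞) ^ ((2:ℝ≥0∞).toReal) ∂volume) ≠ ⊤ := by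
        intro hT
        rw [show (∫⁻ x, ‖v x‖ₑ ^ ((2:ℝ≥0∞).toReal) ∂volume) = ⊤ from hT, ENNReal.top_rpow_of_pos (by norm_num)] at h
        exact (lt_irrefl _ h)
      rw [show ((2:ℝ≥0∞).toReal) = (2:ℝ) by norm_num] at h2
      have he : (∫⁻ x, ENNReal.ofReal ((v x)^2) ∂volume)
          = ∫⁻ x, (‖v x‖₊ : ℝ≥0∞) ^ (2:ℝ) ∂volume :=
        lintegral_congr fun x => (enn_sq _).symm
      rw [he]
      exact h2
    have h2 : Filter.Tendsto
        (fun k => ∫⁻ x, ENNReal.ofReal ((θ k (v x) * v x - v x)^2) ∂volume)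
        Filter.atTop (nhds 0) := by
      have h0 : (0:ℝ≥0∞) = ∫⁻ _x : Fin n → ℝ, (0:ℝ≥0∞) ∂volume := by simp
      rw [h0]
      apply tendsto_lintegral_of_dominated_convergence (fun x => ENNReal.ofReal ((v x)^2))
      · intro k
        exact ENNReal.measurable_ofReal.comp (((hvkmeas k).sub hvmeas).pow_const 2)
      · intro k
        filter_upwards with x
        apply ENNReal.ofReal_le_ofReal
        obtain ⟨h0', h1'⟩ := hθ01 k (v x)
        have e : θ k (v x) * v x - v x = (θ k (v x) - 1) * v x := by ring
        rw [e, mul_pow]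
        have hn : 0 ≤ (θ k (v x)) * (2 - θ k (v x)) * (v x)^2 :=
          mul_nonneg (mul_nonneg h0' (by linarith)) (sq_nonneg _)
        nlinarith [sq_nonneg (v x)]
      · exact hfin
      · filter_upwards with x
        have hev : ∀ᶠ k : ℕ in Filter.atTop,
            ENNReal.ofReal ((θ k (v x) * v x - v x)^2) = 0 := by
          filter_upwards [hevone x] with k hk
          rw [hk]
          simp
        exact Filter.Tendsto.congr'
          (hev.mono fun k h => h.symm) tendsto_const_nhds
    have heq : ∀ k : ℕ, eLpNorm (fun x => θ k (v x) * v x - v x) 2 volume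
        = (∫⁻ x, ENNReal.ofReal ((θ k (v x) * v x - v x)^2) ∂volume) ^ (1/(2:ℝ)) := by
      intro k
      rw [eLpNorm_eq_lintegral_rpow_enorm_toReal (by norm_num) (by norm_num)]
      rw [show ((2:ℝ≥0∞).toReal) = (2:ℝ) by norm_num]
      congr 1
      apply lintegral_congr
      intro x
      exact enn_sq _
    have hcont := (ENNReal.continuous_rpow_const (y := (1/(2:ℝ)))).tendsto 0
    rw [ENNReal.zero_rpow_of_pos (by norm_num)] at hcont
    have := hcont.comp h2
    refine this.congr fun k => ?_
    rw [heq k]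
    rfl
  · -- part 5: gagliardo convergence
    have hq5 : ∀ k (p : (Fin n → ℝ) × (Fin n → ℝ)),
        ((θ k (v p.1) * v p.1 - v p.1) - (θ k (v p.2) * v p.2 - v p.2)) ^ 2
            / ‖p.1 - p.2‖ ^ ((n:ℝ) + 2 * s)
          ≤ (2 + 2*C)^2 * ((v p.1 - v p.2) ^ 2 / ‖p.1 - p.2‖ ^ ((n:ℝ) + 2 * s)) := by
      intro k p
      rw [mul_div_assoc', div_eq_mul_inv, div_eq_mul_inv]
      apply mul_le_mul_of_nonneg_right _ (inv_nonneg.mpr (hdnn p))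
      have hd : |(θ k (v p.1) * v p.1 - v p.1) - (θ k (v p.2) * v p.2 - v p.2)|
          ≤ (2 + 2*C) * |v p.1 - v p.2| := by
        have e : (θ k (v p.1) * v p.1 - v p.1) - (θ k (v p.2) * v p.2 - v p.2)
            = (θ k (v p.1) * v p.1 - θ k (v p.2) * v p.2) - (v p.1 - v p.2) := by ring
        rw [e]
        calc |(θ k (v p.1) * v p.1 - θ k (v p.2) * v p.2) - (v p.1 - v p.2)|
            ≤ |θ k (v p.1) * v p.1 - θ k (v p.2) * v p.2| + |v p.1 - v p.2| := abs_sub _ _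
          _ ≤ (1 + 2*C) * |v p.1 - v p.2| + 1 * |v p.1 - v p.2| := by
              rw [one_mul]
              exact add_le_add (hlip k (v p.1) (v p.2)) le_rfl
          _ = (2 + 2*C) * |v p.1 - v p.2| := by ring
      calc ((θ k (v p.1) * v p.1 - v p.1) - (θ k (v p.2) * v p.2 - v p.2)) ^ 2
          = |(θ k (v p.1) * v p.1 - v p.1) - (θ k (v p.2) * v p.2 - v p.2)| ^ 2 :=
            (sq_abs _).symm
        _ ≤ ((2 + 2*C) * |v p.1 - v p.2|) ^ 2 := pow_le_pow_left₀ (abs_nonneg _) hd 2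
        _ = (2 + 2*C)^2 * (v p.1 - v p.2)^2 := by rw [mul_pow, sq_abs]
    have hfin5 : (∫⁻ p : (Fin n → ℝ) × (Fin n → ℝ),
        ENNReal.ofReal ((2 + 2*C)^2 *
          ((v p.1 - v p.2) ^ 2 / ‖p.1 - p.2‖ ^ ((n:ℝ) + 2 * s)))) ≠ ⊤ := by
      have : ∀ p : (Fin n → ℝ) × (Fin n → ℝ),
          ENNReal.ofReal ((2 + 2*C)^2 * ((v p.1 - v p.2) ^ 2 / ‖p.1 - p.2‖ ^ ((n:ℝ) + 2 * s)))
          = ENNReal.ofReal ((2 + 2*C)^2) *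
            ENNReal.ofReal ((v p.1 - v p.2) ^ 2 / ‖p.1 - p.2‖ ^ ((n:ℝ) + 2 * s)) := by
        intro p
        rw [ENNReal.ofReal_mul (by positivity)]
      rw [lintegral_congr this, lintegral_const_mul' _ _ ENNReal.ofReal_ne_top]
      exact (ENNReal.mul_lt_top ENNReal.ofReal_lt_top hgv).ne
    have h0 : (0:ℝ≥0∞) = ∫⁻ _p : (Fin n → ℝ) × (Fin n → ℝ), (0:ℝ≥0∞) := by simp
    unfold gagliardo
    rw [h0]
    apply tendsto_lintegral_of_dominated_convergence
      (fun p => ENNReal.ofReal ((2 + 2*C)^2 *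
        ((v p.1 - v p.2) ^ 2 / ‖p.1 - p.2‖ ^ ((n:ℝ) + 2 * s))))
    · intro k
      exact hGmeas _ ((hvkmeas k).sub hvmeas)
    · intro k
      filter_upwards with p
      exact ENNReal.ofReal_le_ofReal (hq5 k p)
    · exact hfin5
    · filter_upwards with p
      have hev : ∀ᶠ k : ℕ in Filter.atTop,
          ENNReal.ofReal
            (((fun x => θ k (v x) * v x - v x) p.1 - (fun x => θ k (v x) * v x - v x) p.2) ^ 2
              / ‖p.1 - p.2‖ ^ ((n:ℝ) + 2 * s)) = 0 := by
        filter_upwards [hevone p.1, hevone p.2] with k h1 h2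
        simp only [h1, h2]
        norm_num
      exact Filter.Tendsto.congr' (hev.mono fun k h => h.symm) tendsto_const_nhds
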